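/- The function h(l) = 2 l² Φ(−l√I / 2), defined for l > 0 with constant I > 0 (where Φ is the standard normal CDF), attains a maximum on (0, ∞), and at any interior maximizer l* the first-order condition 4Φ(−l*√I/2) = l*√I · φ(l*√I/2) holds, where φ is the standard normal density. -/

import Mathlib

open Real MeasureTheory Set Filter Topology

noncomputable def stdNormalPDF (u : ℝ) : ℝ :=
  (Real.sqrt (2 * Real.pi))⁻¹ * Real.exp (-u ^ 2 / 2)

noncomputable def stdNormalCDF (t : ℝ) : ℝ :=
  ∫ u in Set.Iic t, stdNormalPDF u

lemma pdf_pos (u : ℝ) : 0 < stdNormalPDF u := by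
  unfold stdNormalPDF
  have : (0:ℝ) < Real.sqrt (2 * Real.pi) := Real.sqrt_pos.mpr (by positivity)
  positivity

lemma pdf_cont : Continuous stdNormalPDF := by
  unfold stdNormalPDF; fun_prop

lemma pdf_integrable : Integrable stdNormalPDF := by
  have h := (integrable_exp_neg_mul_sq (by norm_num : (0:ℝ) < 1/2)).const_mul
    (Real.sqrt (2 * Real.pi))⁻¹
  refine h.congr (Filter.Eventually.of_forall fun u => ?_)
  unfold stdNormalPDF; ring_nf

lemma cdf_hasDerivAt (t : ℝ) : HasDerivAt stdNormalCDF (stdNormalPDF t) t := by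
  have key : ∀ s : ℝ, stdNormalCDF s = stdNormalCDF 0 + ∫ u in (0:ℝ)..s, stdNormalPDF u := by
    intro s
    have := intervalIntegral.integral_Iic_sub_Iic (μ := volume) (f := stdNormalPDF)
      (a := 0) (b := s) pdf_integrable.integrableOn pdf_integrable.integrableOn
    unfold stdNormalCDF
    unfold stdNormalCDF at this
    linarith
  have h2 : HasDerivAt (fun s => stdNormalCDF 0 + ∫ u in (0:ℝ)..s, stdNormalPDF u)
      (stdNormalPDF t) t := by
    exact (intervalIntegral.integral_hasDerivAt_right
      pdf_integrable.intervalIntegrable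
      (pdf_cont.stronglyMeasurableAtFilter _ _)
      pdf_cont.continuousAt).const_add _
  have : stdNormalCDF = fun s => stdNormalCDF 0 + ∫ u in (0:ℝ)..s, stdNormalPDF u :=
    funext key
  rw [this]
  exact h2

lemma cdf_pos (t : ℝ) : 0 < stdNormalCDF t := by
  unfold stdNormalCDF
  rw [setIntegral_pos_iff_support_of_nonneg_ae
      (Filter.Eventually.of_forall fun u => (pdf_pos u).le)
      pdf_integrable.integrableOn]
  have : Function.support stdNormalPDF = Set.univ := by
    ext u; simp [Function.support, (pdf_pos u).ne']
  rw [this, Set.univ_inter]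
  rw [Real.volume_Iic]; exact ENNReal.zero_lt_top

lemma pdf_even (x : ℝ) : stdNormalPDF (-x) = stdNormalPDF x := by
  unfold stdNormalPDF; ring_nf

lemma cdf_tail {t : ℝ} (ht : 2 ≤ t) :
    stdNormalCDF (-t) ≤ (Real.sqrt (2 * Real.pi))⁻¹ * Real.exp (-t) := by
  have hC : (0:ℝ) ≤ (Real.sqrt (2 * Real.pi))⁻¹ := by positivity
  have hmono : ∀ u ∈ Iic (-t), stdNormalPDF u ≤ (Real.sqrt (2 * Real.pi))⁻¹ * Real.exp u := by
    intro u hu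
    simp only [mem_Iic] at hu
    have hu2 : u ≤ -2 := hu.trans (by linarith)
    unfold stdNormalPDF
    refine mul_le_mul_of_nonneg_left (Real.exp_le_exp.mpr ?_) hC
    nlinarith
  calc stdNormalCDF (-t) = ∫ u in Iic (-t), stdNormalPDF u := rfl
    _ ≤ ∫ u in Iic (-t), (Real.sqrt (2 * Real.pi))⁻¹ * Real.exp u :=
        setIntegral_mono_on pdf_integrable.integrableOn
          ((integrableOn_exp_Iic (-t)).const_mul _) measurableSet_Iic hmono
    _ = (Real.sqrt (2 * Real.pi))⁻¹ * Real.exp (-t) := by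
        rw [MeasureTheory.integral_const_mul, integral_exp_Iic]

/-- The RWMH diffusion speed `h(l) = 2 l² Φ(−l√I/2)` attains a maximum on `(0, ∞)`, and at
any maximizer `l*` the first-order condition `4Φ(−l*√I/2) = l*√I φ(l*√I/2)` holds. -/
theorem rwmh_diffusion_speed_max (I : ℝ) (hI : 0 < I) :
    (∃ lstar : ℝ, 0 < lstar ∧ ∀ l : ℝ, 0 < l →
        2 * l ^ 2 * stdNormalCDF (-(l * Real.sqrt I) / 2)
          ≤ 2 * lstar ^ 2 * stdNormalCDF (-(lstar * Real.sqrt I) / 2)) ∧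
    (∀ lstar : ℝ, 0 < lstar →
      (∀ l : ℝ, 0 < l →
        2 * l ^ 2 * stdNormalCDF (-(l * Real.sqrt I) / 2)
          ≤ 2 * lstar ^ 2 * stdNormalCDF (-(lstar * Real.sqrt I) / 2)) →
      4 * stdNormalCDF (-(lstar * Real.sqrt I) / 2)
        = lstar * Real.sqrt I * stdNormalPDF (lstar * Real.sqrt I / 2)) := by
  set s : ℝ := Real.sqrt I with hs_def
  have hs : 0 < s := Real.sqrt_pos.mpr hI
  set g : ℝ → ℝ := fun l => 2 * l ^ 2 * stdNormalCDF (-(l * s) / 2) with hg_def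
  have cdf_cont : Continuous stdNormalCDF :=
    continuous_iff_continuousAt.mpr fun t => (cdf_hasDerivAt t).continuousAt
  have hg_cont : Continuous g := by
    apply Continuous.mul (by fun_prop)
    exact cdf_cont.comp (by fun_prop)
  constructor
  · -- existence of maximizer
    have hg1 : 0 < g 1 := by
      have := cdf_pos (-(1 * s) / 2)
      simp only [hg_def]
      positivity
    -- tail bound function tends to 0
    have htend : Tendsto (fun l : ℝ => 2 * (Real.sqrt (2 * Real.pi))⁻¹ * l ^ 2 *
        Real.exp (-(s / 2 * l))) atTop (𝓝 0) := by
      have h1 : Tendsto (fun l : ℝ => s / 2 * l) atTop atTop :=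
        Tendsto.const_mul_atTop (by positivity) tendsto_id
      have h2 := (tendsto_pow_mul_exp_neg_atTop_nhds_zero 2).comp h1
      have h3 := h2.const_mul (2 * (Real.sqrt (2 * Real.pi))⁻¹ * (2 / s) ^ 2)
      rw [mul_zero] at h3
      refine h3.congr fun l => ?_
      have : (s / 2 * l) ^ 2 = s ^ 2 / 4 * l ^ 2 := by ring
      simp only [Function.comp_apply]
      field_simp [Function.comp]
    have hev : ∀ᶠ l in atTop, 2 * (Real.sqrt (2 * Real.pi))⁻¹ * l ^ 2 *
        Real.exp (-(s / 2 * l)) < g 1 := htend.eventually_lt_const hg1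
    obtain ⟨L, hL⟩ := eventually_atTop.mp hev
    set M : ℝ := max L (max (4 / s) 1) with hM_def
    have hM1 : (1:ℝ) ≤ M := le_max_of_le_right (le_max_right _ _)
    have htail : ∀ l : ℝ, M ≤ l → g l < g 1 := by
      intro l hl
      have hlL : L ≤ l := (le_max_left _ _).trans hl
      have hls : 4 / s ≤ l := ((le_max_left _ _).trans (le_max_right _ _)).trans hl
      have hlpos : 0 < l := lt_of_lt_of_le (by linarith) hl
      have ht2 : 2 ≤ l * s / 2 := by
        rw [div_le_iff₀ hs] at hls
        nlinarith
      have htb := cdf_tail ht2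
      have harg : -(l * s) / 2 = -(l * s / 2) := by ring
      have hgl : g l ≤ 2 * (Real.sqrt (2 * Real.pi))⁻¹ * l ^ 2 *
          Real.exp (-(s / 2 * l)) := by
        simp only [hg_def, harg]
        have : -(s / 2 * l) = -(l * s / 2) := by ring
        rw [this]
        nlinarith [sq_nonneg l, htb, cdf_pos (-(l * s / 2))]
      exact lt_of_le_of_lt hgl (hL l hlL)
    obtain ⟨lstar, hlstar_mem, hmax⟩ :=
      (isCompact_Icc (a := (0:ℝ)) (b := M)).exists_isMaxOn
        (nonempty_Icc.mpr (by linarith)) hg_cont.continuousOn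
    have h1M : (1:ℝ) ∈ Icc (0:ℝ) M := ⟨by norm_num, hM1⟩
    have hg1le : g 1 ≤ g lstar := hmax h1M
    have hlpos : 0 < lstar := by
      rcases lt_or_eq_of_le hlstar_mem.1 with h | h
      · exact h
      · exfalso
        have : g lstar = 0 := by simp [hg_def, ← h]
        linarith
    refine ⟨lstar, hlpos, fun l hl => ?_⟩
    rcases le_or_gt l M with h | h
    · exact hmax ⟨hl.le, h⟩
    · exact le_of_lt (lt_of_lt_of_le (htail l h.le) hg1le)
  · -- first-order condition
    intro lstar hl hmax
    have hloc : IsLocalMax g lstar := by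
      have hmem : Ioi (0:ℝ) ∈ 𝓝 lstar := isOpen_Ioi.mem_nhds hl
      exact Filter.eventually_of_mem hmem fun l hlm => hmax l hlm
    have hinner : HasDerivAt (fun l : ℝ => -(l * s) / 2) (-(1 * s) / 2) lstar :=
      (((hasDerivAt_id lstar).mul_const s).neg).div_const 2
    have houter := cdf_hasDerivAt (-(lstar * s) / 2)
    have hcomp : HasDerivAt (fun l : ℝ => stdNormalCDF (-(l * s) / 2))
        (stdNormalPDF (-(lstar * s) / 2) * (-(1 * s) / 2)) lstar :=
      houter.comp (h := fun l : ℝ => -(l * s) / 2) lstar hinner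
    have hquad : HasDerivAt (fun l : ℝ => 2 * l ^ 2) (2 * (2 * lstar ^ 1)) lstar :=
      (hasDerivAt_pow 2 lstar).const_mul 2
    have hprod := hquad.mul hcomp
    have hzero : 2 * (2 * lstar ^ 1) * stdNormalCDF (-(lstar * s) / 2) +
        2 * lstar ^ 2 * (stdNormalPDF (-(lstar * s) / 2) * (-(1 * s) / 2)) = 0 :=
      hloc.hasDerivAt_eq_zero hprod
    have heven : stdNormalPDF (-(lstar * s) / 2) = stdNormalPDF (lstar * s / 2) := by
      rw [show -(lstar * s) / 2 = -(lstar * s / 2) by ring, pdf_even]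
    rw [heven] at hzero
    have key : lstar * (4 * stdNormalCDF (-(lstar * s) / 2) -
        lstar * s * stdNormalPDF (lstar * s / 2)) = 0 := by
      ring_nf
      ring_nf at hzero
      linarith
    rcases mul_eq_zero.mp key with h | h
    · exact absurd h hl.ne'
    · linarith
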